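/- Let n ≥ 2 be an integer and let u, v > 0 be real numbers. There exist affinely independent points A_0, A_1,…,A_n in ℝ^n (n-dimensional Euclidean space) with ‖A_0 − A_1‖ = v and ‖A_i − A_j‖ = u for every other pair 0 ≤ i < j ≤ n, if and only if 0 < v/u < √(2n/(n−1)). -/

import Mathlib

open Finset

lemma sum_ite_one' {n : ℕ} (a : Fin n) (c d : ℝ) :
    ∑ j : Fin n, (if j = a then c else d) = c + ((n : ℝ) - 1) * d := by
  have h : ∀ j : Fin n, (if j = a then c else d) = d + (if j = a then c - d else 0) := by
    intro j; by_cases h : j = a <;> simp [h]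
  rw [Finset.sum_congr rfl fun j _ => h j, Finset.sum_add_distrib,
    Finset.sum_ite_eq' Finset.univ a, Finset.sum_const]
  simp
  ring

lemma sum_ite_two' {n : ℕ} (a b : Fin n) (hab : a ≠ b) (c1 c2 d : ℝ) :
    ∑ j : Fin n, (if j = a then c1 else if j = b then c2 else d)
      = c1 + c2 + ((n : ℝ) - 2) * d := by
  have h : ∀ j : Fin n, (if j = a then c1 else if j = b then c2 else d)
      = d + (if j = a then c1 - d else 0) + (if j = b then c2 - d else 0) := by
    intro j
    by_cases h1 : j = a
    · subst h1; simp [hab]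
    · by_cases h2 : j = b <;> simp [h1, h2, Ne.symm hab]
  rw [Finset.sum_congr rfl fun j _ => h j, Finset.sum_add_distrib, Finset.sum_add_distrib,
    Finset.sum_ite_eq' Finset.univ a, Finset.sum_ite_eq' Finset.univ b, Finset.sum_const]
  simp
  ring

lemma sum_eq_two' {m : ℕ} (a b : Fin m) (hab : a ≠ b) (g : Fin m → ℝ)
    (h : ∀ i, i ≠ a → i ≠ b → g i = 0) : ∑ i, g i = g a + g b := by
  rw [← Finset.sum_subset (Finset.subset_univ ({a, b} : Finset (Fin m)))
    (fun x _ hx => by simp at hx; exact h x hx.1 hx.2)]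
  rw [Finset.sum_pair hab]

lemma sum_eq_three' {m : ℕ} (a b c : Fin m) (hab : a ≠ b) (hac : a ≠ c) (hbc : b ≠ c)
    (g : Fin m → ℝ) (h : ∀ i, i ≠ a → i ≠ b → i ≠ c → g i = 0) :
    ∑ i, g i = g a + g b + g c := by
  rw [← Finset.sum_subset (Finset.subset_univ ({a, b, c} : Finset (Fin m)))
    (fun x _ hx => by simp at hx; exact h x hx.1 hx.2.1 hx.2.2)]
  rw [Finset.sum_insert (by simp [hab, hac]), Finset.sum_pair hbc]
  ring

lemma construction (n : ℕ) (hn : 2 ≤ n) (u v : ℝ) (hu : 0 < u) (hv : 0 < v)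
    (hlt : ((n:ℝ) - 1) * v ^ 2 < 2 * n * u ^ 2) :
    ∃ A : Fin (n + 1) → EuclideanSpace ℝ (Fin n),
      AffineIndependent ℝ A ∧
      dist (A 0) (A 1) = v ∧
      ∀ i j : Fin (n + 1), i < j → ¬(i = 0 ∧ j = 1) → dist (A i) (A j) = u := by
  haveI : NeZero n := ⟨by omega⟩
  have hN : (2:ℝ) ≤ (n:ℝ) := by exact_mod_cast hn
  have hN1 : (0:ℝ) < (n:ℝ) - 1 := by linarith
  set t := Real.sqrt (u^2/2) with ht
  have ht2 : t^2 = u^2/2 := Real.sq_sqrt (by positivity)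
  have ht0 : 0 < t := Real.sqrt_pos.mpr (by positivity)
  set D := 2*(n:ℝ)*u^2 - ((n:ℝ)-1)*v^2 with hD
  have hD0 : 0 < D := by rw [hD]; linarith
  have hsD : Real.sqrt D ^ 2 = D := Real.sq_sqrt hD0.le
  have hsD0 : 0 < Real.sqrt D := Real.sqrt_pos.mpr hD0
  set y := (2*t + Real.sqrt D)/(2*((n:ℝ)-1)) with hy
  have hyt : t < ((n:ℝ)-1)*y := by
    have h1 : ((n:ℝ)-1)*y = t + Real.sqrt D / 2 := by rw [hy]; field_simp
    rw [h1]; linarith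
  have hq : ((n:ℝ)-1)*y^2 - 2*t*y + v^2/4 - u^2/2 = 0 := by
    have h1 : 2*((n:ℝ)-1)*y - 2*t = Real.sqrt D := by rw [hy]; field_simp; ring
    have hs : (2*((n:ℝ)-1)*y - 2*t)^2 = 2*(n:ℝ)*u^2 - ((n:ℝ)-1)*v^2 := by
      rw [h1, hsD, hD]
    have h4 : 4*((n:ℝ)-1)*(((n:ℝ)-1)*y^2 - 2*t*y + v^2/4 - u^2/2) = 0 := by
      linear_combination hs - 4*ht2
    rcases mul_eq_zero.mp h4 with h | h
    · exfalso; nlinarith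
    · exact h
  have h1v : ((1 : Fin (n+1)) : ℕ) = 1 := by
    have h : 1 < n + 1 := by omega
    simp [Fin.val_one', Nat.mod_eq_of_lt h]
  have h01 : (0 : Fin (n+1)) ≠ 1 := Fin.ne_of_val_ne (by simp [h1v]; omega)
  have hval2 : ∀ i : Fin (n+1), i ≠ 0 → i ≠ 1 → 2 ≤ (i:ℕ) := by
    intro i h0 h1
    rcases Nat.lt_or_ge (i:ℕ) 2 with h | h
    · exfalso
      have h' : (i:ℕ) = 0 ∨ (i:ℕ) = 1 := by omega
      rcases h' with h' | h'
      · exact h0 (Fin.ext (by simp [h']))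
      · exact h1 (Fin.ext (by rw [h1v]; exact h'))
    · exact h
  set f : Fin (n+1) → Fin n → ℝ := fun i j =>
    if (i:ℕ) = 0 then (if j = 0 then v/2 else y)
    else if (i:ℕ) = 1 then (if j = 0 then -(v/2) else y)
    else if (j:ℕ) + 1 = (i:ℕ) then t else 0 with hf
  have hdist : ∀ i i' : Fin (n+1),
      @dist (EuclideanSpace ℝ (Fin n)) _ (WithLp.toLp 2 (f i)) (WithLp.toLp 2 (f i')) = Real.sqrt (∑ k : Fin n, (f i k - f i' k)^2) := by
    intro i i'
    rw [EuclideanSpace.dist_eq]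
    congr 1
    refine Finset.sum_congr rfl fun k _ => ?_
    rw [Real.dist_eq, sq_abs]
  refine ⟨fun i => WithLp.toLp 2 (f i), ?_, ?_, ?_⟩
  · -- affine independence
    rw [affineIndependent_iff]
    intro s w hw hcomb
    set W : Fin (n+1) → ℝ := fun i => if i ∈ s then w i else 0 with hW
    have hWs : ∑ i : Fin (n+1), W i = 0 := by
      rw [← hw, hW]
      rw [Finset.sum_ite_mem, Finset.univ_inter]
    have hWv : ∑ i : Fin (n+1), W i • (WithLp.toLp 2 (f i) : EuclideanSpace ℝ (Fin n)) = 0 := by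
      rw [← hcomb]
      have h : ∀ i : Fin (n+1), W i • (WithLp.toLp 2 (f i) : EuclideanSpace ℝ (Fin n))
          = if i ∈ s then w i • (WithLp.toLp 2 (f i) : EuclideanSpace ℝ (Fin n)) else 0 := by
        intro i; by_cases h : i ∈ s <;> simp [hW, h]
      rw [Finset.sum_congr rfl fun i _ => h i, Finset.sum_ite_mem, Finset.univ_inter]
    have hco : ∀ k : Fin n, ∑ i : Fin (n+1), W i * f i k = 0 := by
      intro k
      have h1 : (∑ i : Fin (n+1), W i • (WithLp.toLp 2 (f i) : EuclideanSpace ℝ (Fin n))) k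
          = ∑ i : Fin (n+1), W i * f i k := by
        rw [WithLp.ofLp_sum, Finset.sum_apply]
        exact Finset.sum_congr rfl fun i _ => by simp [PiLp.smul_apply, smul_eq_mul]
      rw [← h1, hWv]
      rfl
    have hE0 : W 0 * (v/2) - W 1 * (v/2) = 0 := by
      have h := hco 0
      rw [sum_eq_two' (0 : Fin (n+1)) 1 h01 (fun i => W i * f i 0) ?_] at h
      · simp only [hf, Fin.val_zero, h1v] at h
        norm_num at h
        linear_combination h
      · intro i hi0 hi1
        have h2 := hval2 i hi0 hi1
        have hz : f i 0 = 0 := by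
          simp only [hf]
          rw [if_neg (by omega), if_neg (by omega), if_neg (by simp; omega)]
        show W i * f i 0 = 0
        rw [hz, mul_zero]
    have hw01 : W 0 = W 1 := by
      have h : (W 0 - W 1) * v = 0 := by linear_combination 2*hE0
      rcases mul_eq_zero.mp h with h | h
      · linarith
      · linarith
    have hE2 : ∀ i' : Fin (n+1), i' ≠ 0 → i' ≠ 1 → W i' * t = -((W 0 + W 1) * y) := by
      intro i' hi0 hi1
      have hi2 := hval2 i' hi0 hi1
      have hile : (i':ℕ) ≤ n := by omega
      set k : Fin n := ⟨(i':ℕ) - 1, by omega⟩ with hk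
      have hk0 : k ≠ 0 := Fin.ne_of_val_ne (by simp [hk]; omega)
      have h02 : (0 : Fin (n+1)) ≠ i' := Ne.symm hi0
      have h12 : (1 : Fin (n+1)) ≠ i' := Ne.symm hi1
      have h := hco k
      rw [sum_eq_three' (0 : Fin (n+1)) 1 i' h01 h02 h12 (fun i => W i * f i k) ?_] at h
      · have hf0 : f 0 k = y := by
          simp only [hf]
          rw [if_pos (show ((0 : Fin (n+1)):ℕ) = 0 from rfl), if_neg hk0]
        have hf1 : f 1 k = y := by
          simp only [hf]
          rw [if_neg (show ¬((1 : Fin (n+1)):ℕ) = 0 by rw [h1v]; omega), if_pos h1v, if_neg hk0]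
        have hfi : f i' k = t := by
          simp only [hf]
          rw [if_neg (by omega), if_neg (by omega),
            if_pos (show (k:ℕ) + 1 = (i':ℕ) by have : (k:ℕ) = (i':ℕ) - 1 := rfl; omega)]
        simp only [hf0, hf1, hfi] at h
        linarith
      · intro i hi0' hi1' hii'
        have h2 := hval2 i hi0' hi1'
        have hvv : (i:ℕ) ≠ (i':ℕ) := fun hh => hii' (Fin.ext hh)
        have hz : f i k = 0 := by
          simp only [hf]
          rw [if_neg (by omega), if_neg (by omega),
            if_neg (show ¬((k:ℕ) + 1 = (i:ℕ)) by have : (k:ℕ) = (i':ℕ) - 1 := rfl; omega)]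
        show W i * f i k = 0
        rw [hz, mul_zero]
    have hsplit : ∑ i : Fin (n+1), W i
        = ∑ i ∈ Finset.univ \ ({0,1} : Finset (Fin (n+1))), W i + (W 0 + W 1) := by
      rw [← Finset.sum_sdiff (Finset.subset_univ ({0,1} : Finset (Fin (n+1))))]
      rw [Finset.sum_pair h01]
    have hTcard : (Finset.univ \ ({0,1} : Finset (Fin (n+1)))).card = n - 1 := by
      rw [Finset.card_sdiff_of_subset (Finset.subset_univ _)]
      simp [Finset.card_pair h01]
    have hTt : ∑ i ∈ Finset.univ \ ({0,1} : Finset (Fin (n+1))), (W i * t)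
        = ((n:ℝ) - 1) * (-((W 0 + W 1) * y)) := by
      rw [Finset.sum_congr rfl (fun i hi => by
        simp only [Finset.mem_sdiff, Finset.mem_insert, Finset.mem_singleton] at hi
        push_neg at hi
        exact hE2 i hi.2.1 hi.2.2)]
      rw [Finset.sum_const, hTcard, nsmul_eq_mul]
      congr 1
      rw [Nat.cast_sub (by omega : 1 ≤ n)]
      norm_num
    have h6 : ((n:ℝ) - 1) * (-((W 0 + W 1) * y)) + (W 0 + W 1) * t = 0 := by
      rw [hsplit] at hWs
      rw [← hTt, ← Finset.sum_mul]
      linear_combination t * hWs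
    have h7 : (2 * W 0) * (t - ((n:ℝ)-1)*y) = 0 := by
      linear_combination h6 + (t - ((n:ℝ)-1)*y) * hw01
    have hW0 : W 0 = 0 := by
      rcases mul_eq_zero.mp h7 with h | h
      · linarith
      · exfalso; linarith
    intro e he
    have hWe : W e = w e := by simp [hW, he]
    rw [← hWe]
    by_cases he0 : e = 0
    · rw [he0]; exact hW0
    by_cases he1 : e = 1
    · rw [he1, ← hw01]; exact hW0
    · have h := hE2 e he0 he1
      rw [← hw01, hW0] at h
      simp at h
      rcases h with h | h
      · exact h
      · exact absurd h (ne_of_gt ht0)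
  · -- dist (A 0) (A 1) = v
    rw [hdist]
    have hcong : ∀ k : Fin n, (f 0 k - f 1 k)^2 = if k = 0 then v^2 else 0 := by
      intro k
      by_cases hk : k = 0
      · simp only [hf]
        rw [if_pos (show ((0 : Fin (n+1)):ℕ) = 0 from rfl), if_pos hk,
          if_neg (show ¬((1 : Fin (n+1)):ℕ) = 0 by rw [h1v]; omega), if_pos h1v, if_pos hk,
          if_pos hk]
        ring
      · simp only [hf]
        rw [if_pos (show ((0 : Fin (n+1)):ℕ) = 0 from rfl), if_neg hk,
          if_neg (show ¬((1 : Fin (n+1)):ℕ) = 0 by rw [h1v]; omega), if_pos h1v, if_neg hk,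
          if_neg hk]
        ring
    rw [Finset.sum_congr rfl fun k _ => hcong k, sum_ite_one']
    rw [show v^2 + ((n:ℝ)-1) * 0 = v^2 by ring, Real.sqrt_sq hv.le]
  · -- other distances
    intro i j hij hnotij
    have hijv : (i:ℕ) < (j:ℕ) := hij
    rcases Nat.lt_or_ge (j : ℕ) 2 with hj2 | hj2
    · exfalso
      exact hnotij ⟨Fin.ext (by rw [Fin.val_zero]; omega), Fin.ext (by rw [h1v]; omega)⟩
    · have hjle : (j:ℕ) ≤ n := by omega
      set b : Fin n := ⟨(j:ℕ) - 1, by omega⟩ with hb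
      have hb0 : b ≠ 0 := Fin.ne_of_val_ne (by simp [hb]; omega)
      have hj0 : ¬((j:ℕ) = 0) := by omega
      have hj1 : ¬((j:ℕ) = 1) := by omega
      rcases Nat.lt_or_ge (i:ℕ) 2 with hi2 | hi2
      · -- i = 0 or 1
        rw [hdist]
        have hcong : ∀ k : Fin n, (f i k - f j k)^2
            = if k = 0 then (v/2)^2 else if k = b then (y - t)^2 else y^2 := by
          intro k
          have hi01 : (i:ℕ) = 0 ∨ (i:ℕ) = 1 := by omega
          by_cases hk : k = 0
          · have hkb : ¬((k:ℕ) + 1 = (j:ℕ)) := by simp [hk]; omega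
            rcases hi01 with h | h
            · simp only [hf]
              rw [if_pos h, if_pos hk, if_neg (by omega), if_neg (by omega), if_neg hkb,
                if_pos hk]
              ring
            · simp only [hf]
              rw [if_neg (by omega), if_pos h, if_pos hk, if_neg (by omega), if_neg (by omega),
                if_neg hkb, if_pos hk]
              ring
          · by_cases hkb : k = b
            · have hkj : (k:ℕ) + 1 = (j:ℕ) := by rw [hkb]; simp [hb]; omega
              rcases hi01 with h | h
              · simp only [hf]
                rw [if_pos h, if_neg hk, if_neg (by omega), if_neg (by omega), if_pos hkj,
                  if_neg hk, if_pos hkb]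
              · simp only [hf]
                rw [if_neg (by omega), if_pos h, if_neg hk, if_neg (by omega), if_neg (by omega),
                  if_pos hkj, if_neg hk, if_pos hkb]
            · have hkj : ¬((k:ℕ) + 1 = (j:ℕ)) := by
                intro hcon
                exact hkb (Fin.ext (by simp [hb]; omega))
              rcases hi01 with h | h
              · simp only [hf]
                rw [if_pos h, if_neg hk, if_neg (by omega), if_neg (by omega), if_neg hkj,
                  if_neg hk, if_neg hkb]
                ring
              · simp only [hf]
                rw [if_neg (by omega), if_pos h, if_neg hk, if_neg (by omega), if_neg (by omega),
                  if_neg hkj, if_neg hk, if_neg hkb]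
                ring
        rw [Finset.sum_congr rfl fun k _ => hcong k, sum_ite_two' 0 b (Ne.symm hb0)]
        rw [show (v/2)^2 + (y-t)^2 + ((n:ℝ)-2)*y^2 = u^2 by linear_combination hq + ht2]
        exact Real.sqrt_sq hu.le
      · -- 2 ≤ i < j
        have hile : (i:ℕ) ≤ n := by omega
        set a : Fin n := ⟨(i:ℕ) - 1, by omega⟩ with ha
        have hab : a ≠ b := Fin.ne_of_val_ne (by simp [ha, hb]; omega)
        have hi0 : ¬((i:ℕ) = 0) := by omega
        have hi1 : ¬((i:ℕ) = 1) := by omega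
        rw [hdist]
        have hcong : ∀ k : Fin n, (f i k - f j k)^2
            = if k = a then t^2 else if k = b then t^2 else 0 := by
          intro k
          by_cases hka : k = a
          · have h1 : (k:ℕ) + 1 = (i:ℕ) := by rw [hka]; simp [ha]; omega
            have h2 : ¬((k:ℕ) + 1 = (j:ℕ)) := by omega
            simp only [hf]
            rw [if_neg hi0, if_neg hi1, if_neg hj0, if_neg hj1, if_pos h1, if_neg h2,
              if_pos hka]
            ring
          · by_cases hkb : k = b
            · have h1 : ¬((k:ℕ) + 1 = (i:ℕ)) := by rw [hkb]; simp [hb]; omega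
              have h2 : (k:ℕ) + 1 = (j:ℕ) := by rw [hkb]; simp [hb]; omega
              simp only [hf]
              rw [if_neg hi0, if_neg hi1, if_neg hj0, if_neg hj1, if_neg h1, if_pos h2,
                if_neg hka, if_pos hkb]
              ring
            · have h1 : ¬((k:ℕ) + 1 = (i:ℕ)) := by
                intro hcon; exact hka (Fin.ext (by simp [ha]; omega))
              have h2 : ¬((k:ℕ) + 1 = (j:ℕ)) := by
                intro hcon; exact hkb (Fin.ext (by simp [hb]; omega))
              simp only [hf]
              rw [if_neg hi0, if_neg hi1, if_neg hj0, if_neg hj1, if_neg h1, if_neg h2,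
                if_neg hka, if_neg hkb]
              ring
        rw [Finset.sum_congr rfl fun k _ => hcong k, sum_ite_two' a b hab]
        rw [show t^2 + t^2 + ((n:ℝ)-2)*0 = u^2 by linear_combination 2*ht2]
        exact Real.sqrt_sq hu.le

lemma necessity (n : ℕ) (hn : 2 ≤ n) (u v : ℝ) (hu : 0 < u) (hv : 0 < v)
    (A : Fin (n+1) → EuclideanSpace ℝ (Fin n))
    (hind : AffineIndependent ℝ A) (hd : dist (A 0) (A 1) = v)
    (hp : ∀ i j : Fin (n+1), i < j → ¬(i = 0 ∧ j = 1) → dist (A i) (A j) = u) :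
    ((n:ℝ) - 1) * v ^ 2 < 2 * n * u ^ 2 := by
  have hN : (2:ℝ) ≤ (n:ℝ) := by exact_mod_cast hn
  have h1v : ((1 : Fin (n+1)) : ℕ) = 1 := by
    have h : 1 < n + 1 := by omega
    simp [Fin.val_one', Nat.mod_eq_of_lt h]
  have h01 : (0 : Fin (n+1)) ≠ 1 := Fin.ne_of_val_ne (by simp [h1v]; omega)
  set T : Finset (Fin (n+1)) := Finset.univ \ ({0, 1} : Finset (Fin (n+1))) with hT
  have hmemT : ∀ i, i ∈ T ↔ (i ≠ 0 ∧ i ≠ 1) := by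
    intro i; simp [hT]
  have hTcard : T.card = n - 1 := by
    rw [hT, Finset.card_sdiff_of_subset (Finset.subset_univ _)]
    simp [Finset.card_pair h01]
  have hTcast : ((n - 1 : ℕ) : ℝ) = (n:ℝ) - 1 := by
    rw [Nat.cast_sub (by omega : 1 ≤ n)]; norm_num
  set m : EuclideanSpace ℝ (Fin n) := (2⁻¹ : ℝ) • (A 0 + A 1) with hm
  set x : Fin (n+1) → EuclideanSpace ℝ (Fin n) := fun i => A i - m with hx
  set e : EuclideanSpace ℝ (Fin n) := A 0 - A 1 with he
  have hev : ‖e‖ = v := by rw [he, ← dist_eq_norm, hd]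
  have hdu : ∀ i j : Fin (n+1), i ≠ j → ¬(i = 0 ∧ j = 1) → ¬(j = 0 ∧ i = 1) →
      dist (A i) (A j) = u := by
    intro i j hij hn1 hn2
    rcases lt_or_gt_of_ne hij with h | h
    · exact hp i j h hn1
    · rw [dist_comm]; exact hp j i h hn2
  have hne2 : ‖(2⁻¹:ℝ) • e‖^2 = v^2/4 := by
    rw [norm_smul, hev]
    simp
    ring
  have hxnorm : ∀ i ∈ T, ‖x i‖^2 = u^2 - v^2/4 := by
    intro i hi
    rw [hmemT] at hi
    have hA0 : ‖A i - A 0‖ = u := by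
      rw [← dist_eq_norm]
      exact hdu i 0 hi.1 (fun hc => h01 hc.2) (fun hc => hi.2 hc.2)
    have hA1 : ‖A i - A 1‖ = u := by
      rw [← dist_eq_norm]
      exact hdu i 1 hi.2 (fun hc => hi.1 hc.1) (fun hc => h01 hc.1.symm)
    have e1 : A i - A 0 = x i - (2⁻¹:ℝ) • e := by rw [hx, he, hm]; module
    have e2 : A i - A 1 = x i + (2⁻¹:ℝ) • e := by rw [hx, he, hm]; module
    have n1 : u^2 = ‖x i‖^2 - 2 * (inner ℝ (x i) ((2⁻¹:ℝ) • e) : ℝ) + v^2/4 := by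
      rw [← hne2, ← norm_sub_sq_real, ← e1, hA0]
    have n2 : u^2 = ‖x i‖^2 + 2 * (inner ℝ (x i) ((2⁻¹:ℝ) • e) : ℝ) + v^2/4 := by
      rw [← hne2, ← norm_add_sq_real, ← e2, hA1]
    linarith
  have hxinner : ∀ i ∈ T, ∀ j ∈ T, i ≠ j → (inner ℝ (x i) (x j) : ℝ) = u^2/2 - v^2/4 := by
    intro i hi j hj hij
    have hij' : ‖x i - x j‖ = u := by
      have hxx : x i - x j = A i - A j := by rw [hx]; module
      rw [hxx, ← dist_eq_norm]
      rw [hmemT] at hi hj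
      exact hdu i j hij (fun hc => hi.1 hc.1) (fun hc => hj.1 hc.1)
    have hexp := norm_sub_sq_real (x i) (x j)
    rw [hij'] at hexp
    have h1 := hxnorm i hi
    have h2 := hxnorm j hj
    linarith
  set S : EuclideanSpace ℝ (Fin n) := ∑ i ∈ T, x i with hS
  have hSnorm : ‖S‖^2 = ∑ i ∈ T, ∑ j ∈ T, (inner ℝ (x i) (x j) : ℝ) := by
    rw [← real_inner_self_eq_norm_sq, hS, sum_inner]
    exact Finset.sum_congr rfl fun i _ => by rw [inner_sum]
  have hval : ∀ i ∈ T, ∑ j ∈ T, (inner ℝ (x i) (x j) : ℝ)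
      = (u^2 - v^2/4) + ((n:ℝ) - 2) * (u^2/2 - v^2/4) := by
    intro i hi
    have hcong : ∀ j ∈ T, (inner ℝ (x i) (x j) : ℝ)
        = (u^2/2 - v^2/4) + (if j = i then (u^2 - v^2/4) - (u^2/2 - v^2/4) else 0) := by
      intro j hj
      by_cases h : j = i
      · subst h
        rw [if_pos rfl, real_inner_self_eq_norm_sq, hxnorm j hj]
        ring
      · rw [if_neg h, hxinner i hi j hj (Ne.symm h)]
        ring
    rw [Finset.sum_congr rfl hcong, Finset.sum_add_distrib, Finset.sum_ite_eq' T i,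
      if_pos hi, Finset.sum_const, hTcard, nsmul_eq_mul, hTcast]
    ring
  have hS2 : ‖S‖^2 = ((n:ℝ) - 1) * ((u^2 - v^2/4) + ((n:ℝ) - 2) * (u^2/2 - v^2/4)) := by
    rw [hSnorm, Finset.sum_congr rfl hval, Finset.sum_const, hTcard, nsmul_eq_mul, hTcast]
  have hSne : S ≠ 0 := by
    intro h0
    rw [affineIndependent_iff] at hind
    set w : Fin (n+1) → ℝ := fun i =>
      if i = 0 then -(((n:ℝ)-1)/2) else if i = 1 then -(((n:ℝ)-1)/2) else 1 with hw
    have hwT : ∀ i ∈ T, w i = 1 := by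
      intro i hi
      rw [hmemT] at hi
      simp [hw, hi.1, hi.2]
    have hsplit : ∀ g : Fin (n+1) → ℝ, ∑ i : Fin (n+1), g i = ∑ i ∈ T, g i + (g 0 + g 1) := by
      intro g
      rw [hT, ← Finset.sum_sdiff (Finset.subset_univ ({0,1} : Finset (Fin (n+1))))]
      rw [Finset.sum_pair h01]
    have hsum : ∑ i : Fin (n+1), w i = 0 := by
      rw [hsplit, Finset.sum_congr rfl hwT, Finset.sum_const, hTcard, nsmul_eq_mul, hTcast]
      simp [hw, h01]
      ring
    have hsplitV : ∑ i : Fin (n+1), w i • A i = ∑ i ∈ T, w i • A i + (w 0 • A 0 + w 1 • A 1) := by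
      rw [hT, ← Finset.sum_sdiff (Finset.subset_univ ({0,1} : Finset (Fin (n+1))))]
      rw [Finset.sum_pair h01]
    have hTA : ∑ i ∈ T, w i • A i = S + ((n:ℝ) - 1) • m := by
      rw [Finset.sum_congr rfl (fun i hi => by rw [hwT i hi, one_smul])]
      have : ∀ i ∈ T, A i = x i + m := by
        intro i _; rw [hx]; module
      rw [Finset.sum_congr rfl this, Finset.sum_add_distrib, Finset.sum_const, hTcard, ← hS]
      congr 1
      rw [← hTcast, Nat.cast_smul_eq_nsmul ℝ]
    have hvec : ∑ i : Fin (n+1), w i • A i = 0 := by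
      rw [hsplitV, hTA, h0]
      have hw0 : w 0 = -(((n:ℝ)-1)/2) := by simp [hw]
      have hw1 : w 1 = -(((n:ℝ)-1)/2) := by simp [hw, h01.symm, Ne.symm h01]
      rw [hw0, hw1, hm]
      module
    have h2lt : (2 : ℕ) < n + 1 := by omega
    have hk2 : (⟨2, h2lt⟩ : Fin (n+1)) ∈ Finset.univ := Finset.mem_univ _
    have := hind Finset.univ w hsum hvec ⟨2, h2lt⟩ hk2
    have hne0 : (⟨2, h2lt⟩ : Fin (n+1)) ≠ 0 := by
      intro hcon
      have h' := congrArg Fin.val hcon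
      simp at h'
    have hne1 : (⟨2, h2lt⟩ : Fin (n+1)) ≠ 1 := by
      intro hcon
      have h' := congrArg Fin.val hcon
      rw [h1v] at h'
      simp at h'
    simp only [hw] at this
    rw [if_neg hne0, if_neg hne1] at this
    exact one_ne_zero this
  have hSpos : 0 < ‖S‖^2 := by
    have := norm_pos_iff.mpr hSne
    positivity
  rw [hS2] at hSpos
  nlinarith [hSpos, hN, sq_nonneg u, sq_nonneg v]

/-- There exists an `n`-simplex in `ℝⁿ` with one edge of length `v` and all
remaining edges of length `u` if and only if `0 < v/u < √(2n/(n−1))`. -/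
theorem stmt_13 (n : ℕ) (hn : 2 ≤ n) (u v : ℝ) (hu : 0 < u) (hv : 0 < v) :
    (∃ A : Fin (n + 1) → EuclideanSpace ℝ (Fin n),
      AffineIndependent ℝ A ∧
      dist (A 0) (A 1) = v ∧
      ∀ i j : Fin (n + 1), i < j → ¬(i = 0 ∧ j = 1) → dist (A i) (A j) = u) ↔
    (0 < v / u ∧ v / u < Real.sqrt (2 * (n : ℝ) / ((n : ℝ) - 1))) := by
  have hN : (2:ℝ) ≤ (n:ℝ) := by exact_mod_cast hn
  have hN1 : (0:ℝ) < (n:ℝ) - 1 := by linarith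
  have hiff : v / u < Real.sqrt (2 * (n:ℝ) / ((n:ℝ) - 1)) ↔
      ((n:ℝ) - 1) * v ^ 2 < 2 * (n:ℝ) * u ^ 2 := by
    rw [Real.lt_sqrt (by positivity), div_pow, div_lt_div_iff₀ (by positivity) hN1]
    constructor <;> intro h <;> nlinarith [h]
  constructor
  · rintro ⟨A, h1, h2, h3⟩
    exact ⟨by positivity, hiff.mpr (necessity n hn u v hu hv A h1 h2 h3)⟩
  · rintro ⟨-, h2⟩
    exact construction n hn u v hu hv (hiff.mp h2)
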